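/- Let A be a k-linear abelian category over a field k with finite-dimensional Hom spaces, and let W and F be objects such that: (i) End(W) ≅ k; (ii) every nonzero morphism W → F is a monomorphism; and (iii) for every monomorphism ψ : W → F, one has Hom(W, coker(ψ)) = 0. Then dim_k Hom(W, F) ≤ 1. -/
import Mathlib

open CategoryTheory CategoryTheory.Limits

/-- Let `A` be a `k`-linear abelian category over a field `k` with finite-dimensional
Hom spaces, and let `W` and `F` be objects such that: (i) `End(W) ≅ k`; (ii) every
nonzero morphism `W → F` is a monomorphism; and (iii) for every monomorphism
`ψ : W → F`, one has `Hom(W, coker(ψ)) = 0`.  Then `dim_k Hom(W, F) ≤ 1`. -/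
theorem stmt13 {C : Type*} [Category C] [Abelian C]
    (k : Type*) [Field k] [Linear k C]
    [∀ X Y : C, FiniteDimensional k (X ⟶ Y)]
    (W F : C)
    (h1 : ∀ φ : W ⟶ W, ∃ c : k, φ = c • 𝟙 W)
    (h2 : ∀ f : W ⟶ F, f ≠ 0 → Mono f)
    (h3 : ∀ ψ : W ⟶ F, Mono ψ → ∀ g : W ⟶ cokernel ψ, g = 0) :
    Module.finrank k (W ⟶ F) ≤ 1 := by
  by_cases hs : ∀ f : W ⟶ F, f = 0
  · have : Subsingleton (W ⟶ F) := ⟨fun a b => by rw [hs a, hs b]⟩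
    rw [Module.finrank_zero_of_subsingleton]; omega
  · push_neg at hs
    obtain ⟨ψ, hψ⟩ := hs
    have mψ : Mono ψ := h2 ψ hψ
    refine _root_.finrank_le_one ψ (fun w => ?_)
    have hw : w ≫ cokernel.π ψ = 0 := h3 ψ mψ _
    obtain ⟨c, hc⟩ := h1 (Abelian.monoLift ψ w hw)
    refine ⟨c, ?_⟩
    have := Abelian.monoLift_comp ψ w hw
    rw [hc] at this
    simpa [Linear.smul_comp] using this
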